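/- Fix n ≥ 3. Let g be the identity n×n matrix, let A be a symmetric n×n matrix with trace R > 0, and define the curvature tensor of a locally conformally flat manifold (vanishing Weyl tensor) via the Kulkarni–Nomizu product of the Schouten tensor with the metric: Rm_{ikjl} = (1/(n−2))(A_{ij}g_{kl} + A_{kl}g_{ij} − A_{il}g_{kj} − A_{kj}g_{il}) − (R/((n−1)(n−2)))(g_{ij}g_{kl} − g_{il}g_{kj}). Then for every symmetric n×n matrix h, R · Rm_{ikjl}h_{ij}h_{kl} ≤ |A|²|h|², where |A|² = Σ A_{ij}² and |h|² = Σ h_{ij}². -/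

import Mathlib

open Finset Matrix

/-! ### Auxiliary lemmas for the Chen–Wu inequality -/

/-- Sum of a quartic polynomial expression. -/
lemma chenWu_sum_poly4 {n : ℕ} (d : Fin n → ℝ) (c4 c3 c2 c1 c0 : ℝ) :
    ∑ i, (c4 * d i ^ 4 + c3 * d i ^ 3 + c2 * d i ^ 2 + c1 * d i + c0)
      = c4 * (∑ i, d i ^ 4) + c3 * (∑ i, d i ^ 3) + c2 * (∑ i, d i ^ 2)
        + c1 * (∑ i, d i) + n * c0 := by
  simp [Finset.sum_add_distrib, ← Finset.mul_sum, Finset.sum_const, Finset.card_univ,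
    mul_comm]

/-- The key quartic (Okumura-type) inequality: for a centered vector,
`n(n-1) Σ d⁴ ≤ (n²-3n+3) (Σ d²)²`, proved by an explicit sum-of-squares certificate. -/
lemma chenWu_key_quartic {n : ℕ} (hn : 3 ≤ n) (d : Fin n → ℝ) (hd : ∑ i, d i = 0) :
    (n : ℝ) * ((n : ℝ) - 1) * (∑ i, d i ^ 4) ≤
      ((n : ℝ) ^ 2 - 3 * (n : ℝ) + 3) * (∑ i, d i ^ 2) ^ 2 := by
  have hN : (3 : ℝ) ≤ (n : ℝ) := by exact_mod_cast hn
  set N : ℝ := (n : ℝ) with hNdef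
  set S2 : ℝ := ∑ i, d i ^ 2 with hS2
  set S3 : ℝ := ∑ i, d i ^ 3 with hS3
  set S4 : ℝ := ∑ i, d i ^ 4 with hS4
  set q : Fin n → Fin n → ℝ :=
    fun i j => (N - 1) * (N - 2) * (d i * d j) + (N - 1) * (d i ^ 2 + d j ^ 2) - S2 with hq
  have inner : ∀ i : Fin n, ∑ j, q i j ^ 2 =
      (N - 1) ^ 2 * S4 + (2 * (N - 1) ^ 2 * (N - 2) * d i) * S3
        + (((N - 1) * (N - 2) * d i) ^ 2 + 2 * (N - 1) * ((N - 1) * d i ^ 2 - S2)) * S2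
        + (2 * (N - 1) * (N - 2) * d i * ((N - 1) * d i ^ 2 - S2)) * (∑ j, d j)
        + N * ((N - 1) * d i ^ 2 - S2) ^ 2 := by
    intro i
    rw [← chenWu_sum_poly4 d ((N-1)^2) (2*(N-1)^2*(N-2)*d i)
      (((N-1)*(N-2)*d i)^2 + 2*(N-1)*((N-1)*d i^2 - S2))
      (2*(N-1)*(N-2)*d i*((N-1)*d i^2 - S2)) (((N-1)*d i^2 - S2)^2)]
    exact Finset.sum_congr rfl (fun j _ => by simp only [hq]; ring)
  have total : ∑ i, ∑ j, q i j ^ 2 =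
      (N * (N - 1) ^ 2) * S4
        + (((N - 1) * (N - 2)) ^ 2 + 2 * (N - 1) ^ 2 - 2 * N * (N - 1)) * S2 * S2
        + N * ((N - 1) ^ 2 * S4 - 2 * (N - 1) * S2 ^ 2 + N * S2 ^ 2) := by
    calc ∑ i, ∑ j, q i j ^ 2
        = ∑ i, ((N * (N - 1) ^ 2) * d i ^ 4 + 0 * d i ^ 3
            + ((((N - 1) * (N - 2)) ^ 2 + 2 * (N - 1) ^ 2 - 2 * N * (N - 1)) * S2) * d i ^ 2
            + (2 * (N - 1) ^ 2 * (N - 2) * S3) * d i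
            + ((N - 1) ^ 2 * S4 - 2 * (N - 1) * S2 ^ 2 + N * S2 ^ 2)) :=
          Finset.sum_congr rfl (fun i _ => by rw [inner i, hd]; ring)
      _ = _ := by
          rw [chenWu_sum_poly4 d]
          rw [← hS2, ← hS3, ← hS4, hd, ← hNdef]
          ring
  have diag : ∑ i, q i i ^ 2 =
      N ^ 2 * (N - 1) ^ 2 * S4 - 2 * N * (N - 1) * S2 ^ 2 + N * S2 ^ 2 := by
    calc ∑ i, q i i ^ 2
        = ∑ i, ((N ^ 2 * (N - 1) ^ 2) * d i ^ 4 + 0 * d i ^ 3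
            + (-2 * N * (N - 1) * S2) * d i ^ 2 + 0 * d i + S2 ^ 2) :=
          Finset.sum_congr rfl (fun i _ => by simp only [hq]; ring)
      _ = _ := by
          rw [chenWu_sum_poly4 d]
          rw [← hS2, ← hS4, ← hNdef]
          ring
  have hC : 0 ≤ (∑ i, ∑ j, q i j ^ 2) - ∑ i, q i i ^ 2 := by
    rw [← Finset.sum_sub_distrib]
    refine Finset.sum_nonneg fun i _ => ?_
    have h1 : q i i ^ 2 ≤ ∑ j, q i j ^ 2 :=
      Finset.single_le_sum (fun j _ => sq_nonneg (q i j)) (Finset.mem_univ i)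
    linarith
  rw [total, diag] at hC
  have h2 : (0:ℝ) < (N - 1) * (N - 2) := by nlinarith
  nlinarith [hC, h2, mul_pos h2 h2]

/-- The core scalar inequality, in cleared-denominator form. -/
lemma chenWu_core_ineq (N u H p t η α2 : ℝ) (hN : 3 ≤ N) (hη : 0 ≤ η) (hα : 0 ≤ α2)
    (hp : p ^ 2 ≤ α2 * η) (h2 : N * (N - 1) * t ^ 2 ≤ (N - 2) ^ 2 * α2 * η ^ 2) :
    u * (2 * (N - 1) * (N ^ 2 * (p + N * u * H) * H
          - N * (t + 2 * H * p + u * η + N * u * H ^ 2))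
        - u * (N ^ 4 * H ^ 2 - N ^ 2 * (η + N * H ^ 2)))
      ≤ (N - 1) * (N - 2) * ((α2 + N * u ^ 2) * (η + N * H ^ 2)) := by
  have hN0 : (0:ℝ) < N := by linarith
  have hN1 : (0:ℝ) < N - 1 := by linarith
  have hN2 : (0:ℝ) < N - 2 := by linarith
  rcases eq_or_lt_of_le hη with h0 | hpos
  · subst h0
    have hp0 : p = 0 := by nlinarith [sq_nonneg p]
    have ht0 : t = 0 := by nlinarith [sq_nonneg t, mul_pos hN0 hN1]
    rw [hp0, ht0]
    have hkey : (0:ℝ) ≤ (N-1)*(N-2)*N*(α2*H^2) :=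
      mul_nonneg (mul_nonneg (mul_nonneg hN1.le hN2.le) hN0.le)
        (mul_nonneg hα (sq_nonneg H))
    nlinarith [hkey]
  · have c1 : (0:ℝ) ≤ N^2*(N-1)*(N-2)^2*H^2*(α2*η - p^2) :=
      mul_nonneg (by positivity) (by linarith)
    have c2 : (0:ℝ) ≤ N^2*(N-1)*(N-2)^2*(p*H - u*η)^2 := by positivity
    have c3 : (0:ℝ) ≤ N*(N-1)*((N-2)^2*α2*η^2 - N*(N-1)*t^2) :=
      mul_nonneg (by positivity) (by linarith)
    have c4 : (0:ℝ) ≤ N^2*((N-1)*t + (N-2)*u*η)^2 := by positivity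
    have key : N*(N-2)*η*((N - 1) * (N - 2) * ((α2 + N * u ^ 2) * (η + N * H ^ 2))
        - (u * (2 * (N - 1) * (N ^ 2 * (p + N * u * H) * H
          - N * (t + 2 * H * p + u * η + N * u * H ^ 2))
        - u * (N ^ 4 * H ^ 2 - N ^ 2 * (η + N * H ^ 2)))))
        = N^2*(N-1)*(N-2)^2*H^2*(α2*η - p^2) + N^2*(N-1)*(N-2)^2*(p*H - u*η)^2
          + N*(N-1)*((N-2)^2*α2*η^2 - N*(N-1)*t^2) + N^2*((N-1)*t + (N-2)*u*η)^2 := by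
      ring
    have hsum : (0:ℝ) ≤ N*(N-2)*η*((N - 1) * (N - 2) * ((α2 + N * u ^ 2) * (η + N * H ^ 2))
        - (u * (2 * (N - 1) * (N ^ 2 * (p + N * u * H) * H
          - N * (t + 2 * H * p + u * η + N * u * H ^ 2))
        - u * (N ^ 4 * H ^ 2 - N ^ 2 * (η + N * H ^ 2))))) := by
      rw [key]; linarith
    have hmul : (0:ℝ) < N*(N-2)*η := mul_pos (mul_pos hN0 hN2) hpos
    nlinarith [hsum, hmul]

/-- Combining Cauchy–Schwarz with the quartic inequality. -/
lemma chenWu_quart_combine (N av ev S4v tv : ℝ) (hN : 3 ≤ N) (hav : 0 ≤ av)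
    (hCS : (N*tv)^2 ≤ av*(N^2*S4v - N*ev^2)) (hq : N*(N-1)*S4v ≤ (N^2-3*N+3)*ev^2) :
    N*(N-1)*tv^2 ≤ (N-2)^2*av*ev^2 := by
  have hN0 : (0:ℝ) < N := by linarith
  nlinarith [mul_le_mul_of_nonneg_left hCS (show (0:ℝ) ≤ N-1 by linarith),
    mul_le_mul_of_nonneg_left hq (mul_nonneg hN0.le hav), hN0,
    mul_pos hN0 hN0]

/-- The Chen–Wu scalar inequality, for arbitrary finite real sequences. -/
lemma chenWu_scalar_ineq {n : ℕ} (hn : 3 ≤ n) (a d : Fin n → ℝ) :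
    (∑ i, a i) * ((2 / ((n:ℝ) - 2)) * ((∑ i, a i * d i) * (∑ i, d i) - ∑ i, a i * d i ^ 2)
        - ((∑ i, a i) / (((n:ℝ) - 1) * ((n:ℝ) - 2))) * ((∑ i, d i) ^ 2 - ∑ i, d i ^ 2))
      ≤ (∑ i, a i ^ 2) * (∑ i, d i ^ 2) := by
  have hN : (3:ℝ) ≤ (n:ℝ) := by exact_mod_cast hn
  set N : ℝ := (n:ℝ) with hNd
  set u : ℝ := ∑ j, a j with hu
  set H : ℝ := ∑ j, d j with hH
  set P : ℝ := ∑ i, a i * d i with hP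
  set T : ℝ := ∑ i, a i * d i ^ 2 with hT
  set s : ℝ := ∑ i, a i ^ 2 with hs
  set x : ℝ := ∑ i, d i ^ 2 with hx
  have hN0 : (0:ℝ) < N := by linarith
  have hN1 : (0:ℝ) < N - 1 := by linarith
  have hN2 : (0:ℝ) < N - 2 := by linarith
  set A0 : Fin n → ℝ := fun i => N * a i - u with hA0
  set D0 : Fin n → ℝ := fun i => N * d i - H with hD0
  have sumA0 : ∑ i, A0 i = 0 := by
    simp only [hA0, Finset.sum_sub_distrib, ← Finset.mul_sum, Finset.sum_const,
      Finset.card_univ, Fintype.card_fin, nsmul_eq_mul, ← hu, ← hNd]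
    ring
  have sumD0 : ∑ i, D0 i = 0 := by
    simp only [hD0, Finset.sum_sub_distrib, ← Finset.mul_sum, Finset.sum_const,
      Finset.card_univ, Fintype.card_fin, nsmul_eq_mul, ← hH, ← hNd]
    ring
  have ep : ∑ i, A0 i * D0 i = N^2*P - N*u*H := by
    rw [Finset.sum_congr rfl (fun i (_ : i ∈ univ) => show A0 i * D0 i
      = N^2*(a i * d i) - N*H*(a i) - N*u*(d i) + u*H by simp only [hA0, hD0]; ring)]
    simp only [Finset.sum_add_distrib, Finset.sum_sub_distrib, ← Finset.mul_sum,
      Finset.sum_const, Finset.card_univ, Fintype.card_fin, nsmul_eq_mul,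
      ← hu, ← hH, ← hP, ← hNd]
    ring
  have eeta : ∑ i, D0 i ^ 2 = N^2*x - N*H^2 := by
    rw [Finset.sum_congr rfl (fun i (_ : i ∈ univ) => show D0 i ^ 2
      = N^2*(d i ^2) - 2*N*H*(d i) + H^2 by simp only [hD0]; ring)]
    simp only [Finset.sum_add_distrib, Finset.sum_sub_distrib, ← Finset.mul_sum,
      Finset.sum_const, Finset.card_univ, Fintype.card_fin, nsmul_eq_mul,
      ← hH, ← hx, ← hNd]
    ring
  have ealpha : ∑ i, A0 i ^ 2 = N^2*s - N*u^2 := by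
    rw [Finset.sum_congr rfl (fun i (_ : i ∈ univ) => show A0 i ^ 2
      = N^2*(a i ^2) - 2*N*u*(a i) + u^2 by simp only [hA0]; ring)]
    simp only [Finset.sum_add_distrib, Finset.sum_sub_distrib, ← Finset.mul_sum,
      Finset.sum_const, Finset.card_univ, Fintype.card_fin, nsmul_eq_mul,
      ← hu, ← hs, ← hNd]
    ring
  have et : ∑ i, A0 i * D0 i ^ 2 = N^3*T - 2*N^2*H*P - N^2*u*x + 2*N*u*H^2 := by
    rw [Finset.sum_congr rfl (fun i (_ : i ∈ univ) => show A0 i * D0 i ^ 2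
      = N^3*(a i * d i ^2) - 2*N^2*H*(a i * d i) + N*H^2*(a i)
        - N^2*u*(d i ^2) + 2*N*u*H*(d i) - u*H^2 by simp only [hA0, hD0]; ring)]
    simp only [Finset.sum_add_distrib, Finset.sum_sub_distrib, ← Finset.mul_sum,
      Finset.sum_const, Finset.card_univ, Fintype.card_fin, nsmul_eq_mul,
      ← hu, ← hH, ← hP, ← hT, ← hx, ← hNd]
    ring
  have hη : (0:ℝ) ≤ N^2*x - N*H^2 := by
    rw [← eeta]; exact Finset.sum_nonneg fun i _ => sq_nonneg _
  have hα : (0:ℝ) ≤ N^2*s - N*u^2 := by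
    rw [← ealpha]; exact Finset.sum_nonneg fun i _ => sq_nonneg _
  have hpCS : (N^2*P - N*u*H)^2 ≤ (N^2*s - N*u^2) * (N^2*x - N*H^2) := by
    rw [← ep, ← ealpha, ← eeta]
    exact Finset.sum_mul_sq_le_sq_mul_sq univ A0 D0
  have h2 : N*(N-1)*(N^3*T - 2*N^2*H*P - N^2*u*x + 2*N*u*H^2)^2
      ≤ (N-2)^2 * (N^2*s - N*u^2) * (N^2*x - N*H^2)^2 := by
    have hcent : ∑ i, A0 i * (N * D0 i ^ 2 - (∑ k, D0 k ^ 2))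
        = N * (∑ i, A0 i * D0 i ^ 2) := by
      rw [Finset.sum_congr rfl (fun i (_ : i ∈ univ) => show
        A0 i * (N * D0 i ^ 2 - (∑ k, D0 k ^ 2))
        = N*(A0 i * D0 i ^2) - (∑ k, D0 k ^ 2) * A0 i by ring)]
      rw [Finset.sum_sub_distrib, ← Finset.mul_sum, ← Finset.mul_sum, sumA0]
      ring
    have hCS2 : (N * (∑ i, A0 i * D0 i ^ 2))^2
        ≤ (∑ i, A0 i ^ 2) * (∑ i, (N * D0 i ^ 2 - (∑ k, D0 k ^ 2))^2) := by
      rw [← hcent]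
      exact Finset.sum_mul_sq_le_sq_mul_sq univ A0 (fun i => N * D0 i ^ 2 - (∑ k, D0 k ^ 2))
    have hexp : ∑ i, (N * D0 i ^ 2 - (∑ k, D0 k ^ 2))^2
        = N^2*(∑ i, D0 i ^ 4) - N*(∑ i, D0 i ^ 2)^2 := by
      rw [Finset.sum_congr rfl (fun i (_ : i ∈ univ) => show
        (N * D0 i ^ 2 - (∑ k, D0 k ^ 2))^2
        = N^2*(D0 i ^4) - (2*N*(∑ k, D0 k ^ 2))*(D0 i ^2) + (∑ k, D0 k ^ 2)^2 by ring)]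
      simp only [Finset.sum_add_distrib, Finset.sum_sub_distrib, ← Finset.mul_sum,
        Finset.sum_const, Finset.card_univ, Fintype.card_fin, nsmul_eq_mul, ← hNd]
      ring
    have hquart := chenWu_key_quartic hn D0 sumD0
    rw [← hNd] at hquart
    have hαS : (0:ℝ) ≤ ∑ i, A0 i ^ 2 := Finset.sum_nonneg fun i _ => sq_nonneg _
    rw [hexp] at hCS2
    rw [eeta, ealpha, et] at hCS2
    rw [eeta] at hquart
    exact chenWu_quart_combine N (N^2*s - N*u^2) (N^2*x - N*H^2) (∑ i, D0 i ^ 4)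
      (N^3*T - 2*N^2*H*P - N^2*u*x + 2*N*u*H^2) hN hα hCS2 hquart
  have coreineq := chenWu_core_ineq N u H (N^2*P - N*u*H)
    (N^3*T - 2*N^2*H*P - N^2*u*x + 2*N*u*H^2) (N^2*x - N*H^2) (N^2*s - N*u^2)
    hN hη hα hpCS h2
  have hc : (0:ℝ) < (N-1)*(N-2)*N^4 := by positivity
  refine le_of_mul_le_mul_right ?_ hc
  calc (u * ((2 / (N - 2)) * (P * H - T) - (u / ((N - 1) * (N - 2))) * (H ^ 2 - x)))
        * ((N-1)*(N-2)*N^4)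
      = u * (2 * (N - 1) * (N ^ 2 * ((N^2*P - N*u*H) + N * u * H) * H
          - N * ((N^3*T - 2*N^2*H*P - N^2*u*x + 2*N*u*H^2) + 2 * H * (N^2*P - N*u*H)
            + u * (N^2*x - N*H^2) + N * u * H ^ 2))
        - u * (N ^ 4 * H ^ 2 - N ^ 2 * ((N^2*x - N*H^2) + N * H ^ 2))) := by
        field_simp
        ring
    _ ≤ (N - 1) * (N - 2) * (((N^2*s - N*u^2) + N * u ^ 2) * ((N^2*x - N*H^2) + N * H ^ 2)) :=
        coreineq
    _ = s * x * ((N-1)*(N-2)*N^4) := by ring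

open Finset in
/-- Chen–Wu inequality (algebraic form, locally conformally flat case): for `n ≥ 3`,
a symmetric `n×n` matrix `A` with positive trace `R`, and the curvature tensor given by the
Kulkarni–Nomizu product of the Schouten tensor with the metric (identity matrix), one has
`R · Rm_{ikjl}h_{ij}h_{kl} ≤ |A|²|h|²` for every symmetric `n×n` matrix `h`. -/
theorem chen_wu (n : ℕ) (hn : 3 ≤ n)
    (A h : Matrix (Fin n) (Fin n) ℝ)
    (hA : A.IsSymm) (hh : h.IsSymm)
    (R : ℝ) (hR : R = A.trace) (hRpos : 0 < R)
    (δ : Fin n → Fin n → ℝ) (hδ : ∀ i j, δ i j = if i = j then 1 else 0)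
    (Rm : Fin n → Fin n → Fin n → Fin n → ℝ)
    (hRm : ∀ i k j l, Rm i k j l =
      (1 / ((n : ℝ) - 2)) *
        (A i j * δ k l + A k l * δ i j - A i l * δ k j - A k j * δ i l)
      - (R / (((n : ℝ) - 1) * ((n : ℝ) - 2))) * (δ i j * δ k l - δ i l * δ k j)) :
    R * (∑ i, ∑ j, ∑ k, ∑ l, Rm i k j l * h i j * h k l) ≤
      (∑ i, ∑ j, (A i j) ^ 2) * (∑ i, ∑ j, (h i j) ^ 2) := by
  classical
  -- ### Step 1: algebraic reduction of the curvature sum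
  have pull : ∀ (c : Prop) [Decidable c] (f : Fin n → ℝ),
      (∑ y, if c then f y else 0) = if c then (∑ y, f y) else 0 := by
    intro c _ f; split_ifs <;> simp
  have tri : ∀ f : Fin n → Fin n → Fin n → ℝ,
      ∑ i, ∑ j, ∑ k, f i j k = ∑ k, ∑ i, ∑ j, f i j k := by
    intro f
    calc ∑ i, ∑ j, ∑ k, f i j k = ∑ i, ∑ k, ∑ j, f i j k :=
          Finset.sum_congr rfl fun i _ => Finset.sum_comm
      _ = ∑ k, ∑ i, ∑ j, f i j k := Finset.sum_comm
  have hpoint : ∀ i j k l : Fin n, Rm i k j l * h i j * h k l =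
      (1/((n:ℝ)-2)) * (if k = l then A i j * h i j * h k l else 0)
      + (1/((n:ℝ)-2)) * (if i = j then A k l * h i j * h k l else 0)
      - (1/((n:ℝ)-2)) * (if k = j then A i l * h i j * h k l else 0)
      - (1/((n:ℝ)-2)) * (if i = l then A k j * h i j * h k l else 0)
      - (R/(((n:ℝ)-1)*((n:ℝ)-2))) * (if k = l then (if i = j then h i j * h k l else 0) else 0)
      + (R/(((n:ℝ)-1)*((n:ℝ)-2))) * (if i = l then (if k = j then h i j * h k l else 0) else 0) := by
    intro i j k l
    rw [hRm]
    simp only [hδ]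
    split_ifs <;> ring
  have E1 : (∑ i, ∑ j, ∑ k, ∑ l, if k = l then A i j * h i j * h k l else 0)
      = (∑ i, ∑ j, A i j * h i j) * (∑ i, h i i) := by
    calc (∑ i, ∑ j, ∑ k, ∑ l, if k = l then A i j * h i j * h k l else 0)
        = ∑ i, ∑ j, ∑ k, A i j * h i j * h k k :=
          Finset.sum_congr rfl fun i _ => Finset.sum_congr rfl fun j _ =>
            Finset.sum_congr rfl fun k _ => by rw [Finset.sum_ite_eq]; simp
      _ = _ := by
          simp only [← Finset.mul_sum, ← Finset.sum_mul]
  have E2 : (∑ i, ∑ j, ∑ k, ∑ l, if i = j then A k l * h i j * h k l else 0)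
      = (∑ i, h i i) * (∑ i, ∑ j, A i j * h i j) := by
    calc (∑ i, ∑ j, ∑ k, ∑ l, if i = j then A k l * h i j * h k l else 0)
        = ∑ i, ∑ j, if i = j then (∑ k, ∑ l, A k l * h i j * h k l) else 0 := by
          refine Finset.sum_congr rfl fun i _ => Finset.sum_congr rfl fun j _ => ?_
          rw [Finset.sum_congr rfl fun k (_ : k ∈ univ) =>
              pull (i = j) (fun l => A k l * h i j * h k l),
            pull (i = j) (fun k => ∑ l, A k l * h i j * h k l)]
      _ = ∑ i, ∑ k, ∑ l, A k l * h i i * h k l := by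
          refine Finset.sum_congr rfl fun i _ => ?_
          rw [Finset.sum_ite_eq]; simp
      _ = ∑ i, h i i * (∑ k, ∑ l, A k l * h k l) := by
          refine Finset.sum_congr rfl fun i _ => ?_
          rw [Finset.mul_sum]
          refine Finset.sum_congr rfl fun k _ => ?_
          rw [Finset.mul_sum]
          exact Finset.sum_congr rfl fun l _ => by ring
      _ = _ := by rw [← Finset.sum_mul]
  have E3 : (∑ i, ∑ j, ∑ k, ∑ l, if k = j then A i l * h i j * h k l else 0)
      = ∑ i, ∑ j, ∑ l, A i l * h i j * h j l := by
    refine Finset.sum_congr rfl fun i _ => Finset.sum_congr rfl fun j _ => ?_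
    rw [Finset.sum_congr rfl fun k (_ : k ∈ univ) =>
      pull (k = j) (fun l => A i l * h i j * h k l)]
    rw [Finset.sum_ite_eq']; simp
  have E4 : (∑ i, ∑ j, ∑ k, ∑ l, if i = l then A k j * h i j * h k l else 0)
      = ∑ i, ∑ j, ∑ l, A i l * h i j * h j l := by
    calc (∑ i, ∑ j, ∑ k, ∑ l, if i = l then A k j * h i j * h k l else 0)
        = ∑ i, ∑ j, ∑ k, A k j * h i j * h k i :=
          Finset.sum_congr rfl fun i _ => Finset.sum_congr rfl fun j _ =>
            Finset.sum_congr rfl fun k _ => by rw [Finset.sum_ite_eq]; simp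
      _ = ∑ k, ∑ i, ∑ j, A k j * h i j * h k i := tri _
      _ = ∑ i, ∑ j, ∑ l, A i l * h i j * h j l := by
          refine Finset.sum_congr rfl fun k _ => Finset.sum_congr rfl fun i _ =>
            Finset.sum_congr rfl fun j _ => by ring
  have E5 : (∑ i, ∑ j, ∑ k, ∑ l, if k = l then (if i = j then h i j * h k l else 0) else 0)
      = (∑ i, h i i) * (∑ i, h i i) := by
    calc (∑ i, ∑ j, ∑ k, ∑ l, if k = l then (if i = j then h i j * h k l else 0) else 0)
        = ∑ i, ∑ j, ∑ k, if i = j then h i j * h k k else 0 :=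
          Finset.sum_congr rfl fun i _ => Finset.sum_congr rfl fun j _ =>
            Finset.sum_congr rfl fun k _ => by rw [Finset.sum_ite_eq]; simp
      _ = ∑ i, ∑ j, if i = j then (∑ k, h i j * h k k) else 0 :=
          Finset.sum_congr rfl fun i _ => Finset.sum_congr rfl fun j _ =>
            pull (i = j) (fun k => h i j * h k k)
      _ = ∑ i, ∑ k, h i i * h k k := by
          refine Finset.sum_congr rfl fun i _ => ?_
          rw [Finset.sum_ite_eq]; simp
      _ = _ := by simp only [← Finset.mul_sum, ← Finset.sum_mul]
  have E6 : (∑ i, ∑ j, ∑ k, ∑ l, if i = l then (if k = j then h i j * h k l else 0) else 0)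
      = ∑ i, ∑ j, h i j ^ 2 := by
    calc (∑ i, ∑ j, ∑ k, ∑ l, if i = l then (if k = j then h i j * h k l else 0) else 0)
        = ∑ i, ∑ j, ∑ k, if k = j then h i j * h k i else 0 :=
          Finset.sum_congr rfl fun i _ => Finset.sum_congr rfl fun j _ =>
            Finset.sum_congr rfl fun k _ => by rw [Finset.sum_ite_eq]; simp
      _ = ∑ i, ∑ j, h i j * h j i := by
          refine Finset.sum_congr rfl fun i _ => Finset.sum_congr rfl fun j _ => ?_
          rw [Finset.sum_ite_eq']; simp
      _ = ∑ i, ∑ j, h i j ^ 2 := by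
          refine Finset.sum_congr rfl fun i _ => Finset.sum_congr rfl fun j _ => ?_
          rw [hh.apply i j]; ring
  have hred : (∑ i, ∑ j, ∑ k, ∑ l, Rm i k j l * h i j * h k l)
      = (2/((n:ℝ)-2)) * ((∑ i, ∑ j, A i j * h i j) * (∑ i, h i i)
          - (∑ i, ∑ j, ∑ l, A i l * h i j * h j l))
        - (R/(((n:ℝ)-1)*((n:ℝ)-2))) * ((∑ i, h i i)^2 - ∑ i, ∑ j, h i j ^2) := by
    calc (∑ i, ∑ j, ∑ k, ∑ l, Rm i k j l * h i j * h k l)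
        = (1/((n:ℝ)-2)) * (∑ i, ∑ j, ∑ k, ∑ l, if k = l then A i j * h i j * h k l else 0)
          + (1/((n:ℝ)-2)) * (∑ i, ∑ j, ∑ k, ∑ l, if i = j then A k l * h i j * h k l else 0)
          - (1/((n:ℝ)-2)) * (∑ i, ∑ j, ∑ k, ∑ l, if k = j then A i l * h i j * h k l else 0)
          - (1/((n:ℝ)-2)) * (∑ i, ∑ j, ∑ k, ∑ l, if i = l then A k j * h i j * h k l else 0)
          - (R/(((n:ℝ)-1)*((n:ℝ)-2)))
              * (∑ i, ∑ j, ∑ k, ∑ l, if k = l then (if i = j then h i j * h k l else 0) else 0)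
          + (R/(((n:ℝ)-1)*((n:ℝ)-2)))
              * (∑ i, ∑ j, ∑ k, ∑ l, if i = l then (if k = j then h i j * h k l else 0) else 0) := by
          simp only [hpoint, Finset.sum_add_distrib, Finset.sum_sub_distrib, ← Finset.mul_sum]
      _ = _ := by rw [E1, E2, E3, E4, E5, E6]; ring
  -- ### Step 2: diagonalize `h` by the spectral theorem
  have hH2 : h.IsHermitian := by
    rw [Matrix.IsHermitian, Matrix.conjTranspose_eq_transpose_of_trivial]; exact hh
  set U : Matrix (Fin n) (Fin n) ℝ := (hH2.eigenvectorUnitary : Matrix (Fin n) (Fin n) ℝ)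
    with hU
  set d : Fin n → ℝ := hH2.eigenvalues with hd
  have hdiag : star U * h * U = Matrix.diagonal d := by
    have := hH2.conjStarAlgAut_star_eigenvectorUnitary
    simpa [Unitary.conjStarAlgAut_apply] using this
  have hU1 : U * star U = 1 :=
    Matrix.mem_unitaryGroup_iff.mp (hH2.eigenvectorUnitary).2
  have hU2 : star U * U = 1 :=
    Matrix.mem_unitaryGroup_iff'.mp (hH2.eigenvectorUnitary).2
  have hspec : h = U * Matrix.diagonal d * star U := by
    rw [← hdiag]
    rw [show U * (star U * h * U) * star U = (U * star U) * h * (U * star U) by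
      simp only [mul_assoc]]
    rw [hU1, one_mul, mul_one]
  set B : Matrix (Fin n) (Fin n) ℝ := star U * A * U with hB
  have cancel1 : ∀ Z : Matrix (Fin n) (Fin n) ℝ, star U * (U * Z) = Z := fun Z => by
    rw [← mul_assoc, hU2, one_mul]
  have cancel2 : ∀ Z : Matrix (Fin n) (Fin n) ℝ, U * (star U * Z) = Z := fun Z => by
    rw [← mul_assoc, hU1, one_mul]
  have hsU : star U = Uᵀ := Matrix.conjTranspose_eq_transpose_of_trivial U
  have hBsym : B.IsSymm := by
    show Bᵀ = B
    rw [hB]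
    calc (star U * A * U)ᵀ = Uᵀ * (star U * A)ᵀ := Matrix.transpose_mul _ _
      _ = Uᵀ * (Aᵀ * (star U)ᵀ) := by rw [Matrix.transpose_mul]
      _ = star U * A * U := by
          rw [hA.eq, hsU, Matrix.transpose_transpose, ← mul_assoc]
  have hhh : h * h = U * (Matrix.diagonal d * (Matrix.diagonal d * star U)) := by
    rw [hspec]
    simp only [mul_assoc, cancel1, cancel2]
  have tr1 : Matrix.trace B = Matrix.trace A := by
    rw [hB, Matrix.trace_mul_cycle, hU1, one_mul]
  have tr2 : Matrix.trace (B * Matrix.diagonal d) = Matrix.trace (A * h) := by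
    rw [hB, hspec]
    simp only [mul_assoc]
    rw [Matrix.trace_mul_comm (star U)]
    simp only [mul_assoc]
  have tr3 : Matrix.trace (B * (Matrix.diagonal d * Matrix.diagonal d))
      = Matrix.trace (A * (h * h)) := by
    rw [hB, hhh]
    simp only [mul_assoc]
    rw [Matrix.trace_mul_comm (star U)]
    simp only [mul_assoc]
  have tr4 : Matrix.trace (B * B) = Matrix.trace (A * A) := by
    rw [hB]
    simp only [mul_assoc, cancel2]
    rw [Matrix.trace_mul_comm (star U)]
    simp only [mul_assoc, hU1, mul_one]
  have tr5 : Matrix.trace h = Matrix.trace (Matrix.diagonal d) := by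
    rw [hspec, Matrix.trace_mul_comm, ← mul_assoc, hU2, one_mul]
  have tr6 : Matrix.trace (h * h)
      = Matrix.trace (Matrix.diagonal d * Matrix.diagonal d) := by
    rw [hhh, Matrix.trace_mul_comm]
    simp only [mul_assoc, hU2, mul_one]
  -- ### Step 3: conversions between entry sums and traces
  have l1 : Matrix.trace (A * h) = ∑ i, ∑ j, A i j * h i j := by
    simp only [Matrix.trace, Matrix.diag_apply, Matrix.mul_apply]
    exact Finset.sum_congr rfl fun i _ => Finset.sum_congr rfl fun j _ => by
      rw [hh.apply i j]
  have l2 : Matrix.trace (B * Matrix.diagonal d) = ∑ i, B i i * d i := by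
    simp only [Matrix.trace, Matrix.diag_apply, Matrix.mul_diagonal]
  have l3 : Matrix.trace (A * (h * h)) = ∑ i, ∑ j, ∑ l, A i l * h i j * h j l := by
    simp only [Matrix.trace, Matrix.diag_apply, Matrix.mul_apply, Finset.mul_sum]
    rw [Finset.sum_congr rfl fun i (_ : i ∈ univ) => Finset.sum_comm]
    refine Finset.sum_congr rfl fun i _ => Finset.sum_congr rfl fun j _ =>
      Finset.sum_congr rfl fun l _ => ?_
    rw [hh.apply j l, hh.apply i j]
    ring
  have l4 : Matrix.trace (B * (Matrix.diagonal d * Matrix.diagonal d))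
      = ∑ i, B i i * d i ^ 2 := by
    simp only [Matrix.diagonal_mul_diagonal, Matrix.trace, Matrix.diag_apply,
      Matrix.mul_diagonal, Pi.mul_apply]
    exact Finset.sum_congr rfl fun i _ => by ring
  have l5 : Matrix.trace (h * h) = ∑ i, ∑ j, h i j ^ 2 := by
    simp only [Matrix.trace, Matrix.diag_apply, Matrix.mul_apply]
    exact Finset.sum_congr rfl fun i _ => Finset.sum_congr rfl fun j _ => by
      rw [hh.apply i j]; ring
  have l6 : Matrix.trace (A * A) = ∑ i, ∑ j, A i j ^ 2 := by
    simp only [Matrix.trace, Matrix.diag_apply, Matrix.mul_apply]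
    exact Finset.sum_congr rfl fun i _ => Finset.sum_congr rfl fun j _ => by
      rw [hA.apply i j]; ring
  have l7 : Matrix.trace (B * B) = ∑ i, ∑ j, B i j ^ 2 := by
    simp only [Matrix.trace, Matrix.diag_apply, Matrix.mul_apply]
    exact Finset.sum_congr rfl fun i _ => Finset.sum_congr rfl fun j _ => by
      rw [hBsym.apply i j]; ring
  have cP : ∑ i, ∑ j, A i j * h i j = ∑ i, B i i * d i := by rw [← l1, ← tr2, l2]
  have cT : ∑ i, ∑ j, ∑ l, A i l * h i j * h j l = ∑ i, B i i * d i ^ 2 := by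
    rw [← l3, ← tr3, l4]
  have cH : ∑ i, h i i = ∑ i, d i := by
    have : Matrix.trace h = ∑ i, h i i := by
      simp only [Matrix.trace, Matrix.diag_apply]
    rw [← this, tr5, Matrix.trace_diagonal]
  have cx : ∑ i, ∑ j, h i j ^ 2 = ∑ i, d i ^ 2 := by
    rw [← l5, tr6, Matrix.diagonal_mul_diagonal, Matrix.trace_diagonal]
    exact Finset.sum_congr rfl fun i _ => by simp [sq]
  have cA2 : ∑ i, ∑ j, A i j ^ 2 = ∑ i, ∑ j, B i j ^ 2 := by rw [← l6, ← tr4, l7]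
  have hRB : R = ∑ i, B i i := by
    rw [hR, ← tr1]
    simp only [Matrix.trace, Matrix.diag_apply]
  -- ### Step 4: apply the scalar inequality
  have SC := chenWu_scalar_ineq hn (fun i => B i i) d
  rw [hred, hRB, cP, cT, cH, cx, cA2]
  calc (∑ i, B i i) * (2 / ((n:ℝ) - 2) * ((∑ i, B i i * d i) * (∑ i, d i)
          - ∑ i, B i i * d i ^ 2)
        - (∑ i, B i i) / (((n:ℝ) - 1) * ((n:ℝ) - 2)) * ((∑ i, d i) ^ 2 - ∑ i, d i ^ 2))
      ≤ (∑ i, (B i i) ^ 2) * (∑ i, d i ^ 2) := SC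
    _ ≤ (∑ i, ∑ j, B i j ^ 2) * (∑ i, d i ^ 2) := by
        refine mul_le_mul_of_nonneg_right ?_ (Finset.sum_nonneg fun i _ => sq_nonneg _)
        refine Finset.sum_le_sum fun i _ => ?_
        exact Finset.single_le_sum (fun j (_ : j ∈ univ) => sq_nonneg (B i j))
          (Finset.mem_univ i)
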